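/- Let n ≥ 1 and 1 ≤ k ≤ n. Let 𝒴_n^k denote the set of real symmetric n×n matrices Y with Y² = Y and trace(Y) ≤ k. Then the convex hull of 𝒴_n^k equals the set of real symmetric n×n matrices P such that 0 ⪯ P ⪯ I and trace(P) ≤ k. -/

import Mathlib

open Matrix Finset

/-- Sum of a 0/1-valued function over a finset is the cardinality of its 1-set. -/
lemma sum01 {n : ℕ} (s : Finset (Fin n)) (x : Fin n → ℝ) (h : ∀ i ∈ s, x i = 0 ∨ x i = 1) :
    ∑ i ∈ s, x i = ((s.filter (fun i => x i = 1)).card : ℝ) := by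
  rw [← Finset.sum_boole]
  refine Finset.sum_congr rfl fun i hi => ?_
  rcases h i hi with h0 | h1
  · simp only [h0]
    have : (0:ℝ) ≠ 1 := by norm_num
    simp [h0, this]
  · simp [h1]

lemma frac_lemma (n k : ℕ) : ∀ (m : ℕ) (x : Fin n → ℝ),
    (Finset.univ.filter (fun i => x i ≠ 0 ∧ x i ≠ 1)).card ≤ m →
    (∀ i, 0 ≤ x i) → (∀ i, x i ≤ 1) → (∑ i, x i) ≤ (k : ℝ) →
    x ∈ convexHull ℝ {y : Fin n → ℝ | (∀ i, y i = 0 ∨ y i = 1) ∧ ∑ i, y i ≤ (k : ℝ)} := by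
  intro m
  induction m with
  | zero =>
    intro x hc h0 h1 hs
    refine subset_convexHull ℝ _ ⟨fun i => ?_, hs⟩
    have := Finset.card_eq_zero.mp (Nat.le_zero.mp hc)
    by_contra h
    push_neg at h
    have : i ∈ Finset.univ.filter (fun i => x i ≠ 0 ∧ x i ≠ 1) := by
      simp [h.1, h.2]
    simp [‹Finset.univ.filter (fun i => x i ≠ 0 ∧ x i ≠ 1) = ∅›] at this
  | succ m ih =>
    intro x hc h0 h1 hs
    set F := Finset.univ.filter (fun i => x i ≠ 0 ∧ x i ≠ 1) with hF
    by_cases hFe : F = ∅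
    · refine subset_convexHull ℝ _ ⟨fun i => ?_, hs⟩
      by_contra h
      push_neg at h
      have : i ∈ F := by simp [hF, h.1, h.2]
      simp [hFe] at this
    · obtain ⟨i, hiF⟩ := Finset.nonempty_iff_ne_empty.mpr hFe
      have hxi : x i ≠ 0 ∧ x i ≠ 1 := by simpa [hF] using hiF
      have hxi0 : 0 < x i := lt_of_le_of_ne (h0 i) (Ne.symm hxi.1)
      have hxi1 : x i < 1 := lt_of_le_of_ne (h1 i) hxi.2
      by_cases hj : ∃ j ∈ F, j ≠ i
      · -- two fractional coordinates: transfer mass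
        obtain ⟨j, hjF, hji⟩ := hj
        have hxj : x j ≠ 0 ∧ x j ≠ 1 := by simpa [hF] using hjF
        have hxj0 : 0 < x j := lt_of_le_of_ne (h0 j) (Ne.symm hxj.1)
        have hxj1 : x j < 1 := lt_of_le_of_ne (h1 j) hxj.2
        set a := x i
        set b := x j
        set tp := min (1 - a) b with htp
        set tm := min a (1 - b) with htm
        have htp0 : 0 < tp := lt_min (by linarith) hxj0
        have htm0 : 0 < tm := lt_min hxi0 (by linarith)
        set y := Function.update (Function.update x i (a + tp)) j (b - tp) with hy
        set z := Function.update (Function.update x i (a - tm)) j (b + tm) with hz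
        have hij : i ≠ j := fun h => hji h.symm
        have hyi : y i = a + tp := by simp [hy, Function.update, hij]
        have hyj : y j = b - tp := by simp [hy, Function.update]
        have hzi : z i = a - tm := by simp [hz, Function.update, hij]
        have hzj : z j = b + tm := by simp [hz, Function.update]
        have hyo : ∀ l, l ≠ i → l ≠ j → y l = x l := by
          intro l hli hlj; simp [hy, Function.update, hli, hlj]
        have hzo : ∀ l, l ≠ i → l ≠ j → z l = x l := by
          intro l hli hlj; simp [hz, Function.update, hli, hlj]
        -- sums are preserved
        have hsumsplit : ∀ w : Fin n → ℝ, ∑ l, w l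
            = w j + (w i + ∑ l ∈ (Finset.univ.erase j).erase i, w l) := by
          intro w
          rw [← Finset.add_sum_erase _ _ (Finset.mem_univ j),
            ← Finset.add_sum_erase _ _ (Finset.mem_erase.mpr ⟨hij, Finset.mem_univ i⟩)]
        have hsumy : ∑ l, y l = ∑ l, x l := by
          rw [hsumsplit y, hsumsplit x, hyi, hyj]
          have : ∑ l ∈ (Finset.univ.erase j).erase i, y l
              = ∑ l ∈ (Finset.univ.erase j).erase i, x l := by
            refine Finset.sum_congr rfl fun l hl => ?_
            simp only [Finset.mem_erase] at hl
            exact hyo l hl.1 hl.2.1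
          rw [this]; ring
        have hsumz : ∑ l, z l = ∑ l, x l := by
          rw [hsumsplit z, hsumsplit x, hzi, hzj]
          have : ∑ l ∈ (Finset.univ.erase j).erase i, z l
              = ∑ l ∈ (Finset.univ.erase j).erase i, x l := by
            refine Finset.sum_congr rfl fun l hl => ?_
            simp only [Finset.mem_erase] at hl
            exact hzo l hl.1 hl.2.1
          rw [this]; ring
        -- bounds for y and z
        have hy0 : ∀ l, 0 ≤ y l := by
          intro l
          by_cases hlj : l = j
          · subst hlj; rw [hyj]; have := min_le_right (1-a) b; linarith
          by_cases hli : l = i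
          · subst hli; rw [hyi]; positivity
          · rw [hyo l hli hlj]; exact h0 l
        have hy1 : ∀ l, y l ≤ 1 := by
          intro l
          by_cases hlj : l = j
          · subst hlj; rw [hyj]; linarith
          by_cases hli : l = i
          · subst hli; rw [hyi]; have := min_le_left (1-a) b; linarith
          · rw [hyo l hli hlj]; exact h1 l
        have hz0 : ∀ l, 0 ≤ z l := by
          intro l
          by_cases hlj : l = j
          · subst hlj; rw [hzj]; positivity
          by_cases hli : l = i
          · subst hli; rw [hzi]; have := min_le_left a (1-b); linarith
          · rw [hzo l hli hlj]; exact h0 l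
        have hz1 : ∀ l, z l ≤ 1 := by
          intro l
          by_cases hlj : l = j
          · subst hlj; rw [hzj]; have := min_le_right a (1-b); linarith
          by_cases hli : l = i
          · subst hli; rw [hzi]; linarith
          · rw [hzo l hli hlj]; exact h1 l
        -- cardinality decreases
        have hcards : ∀ w : Fin n → ℝ, (∀ l, l ≠ i → l ≠ j → w l = x l) →
            (w i = 0 ∨ w i = 1 ∨ w j = 0 ∨ w j = 1) →
            (Finset.univ.filter (fun l => w l ≠ 0 ∧ w l ≠ 1)).card ≤ m := by
          intro w hwo hcase
          have hFpos : 1 ≤ F.card := Finset.card_pos.mpr ⟨i, hiF⟩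
          have hsub : ∀ (p : Fin n), p ∈ F → (Finset.univ.filter (fun l => w l ≠ 0 ∧ w l ≠ 1)) ⊆ F.erase p →
              (Finset.univ.filter (fun l => w l ≠ 0 ∧ w l ≠ 1)).card ≤ m := by
            intro p hpF hp
            calc (Finset.univ.filter (fun l => w l ≠ 0 ∧ w l ≠ 1)).card
                ≤ (F.erase p).card := Finset.card_le_card hp
              _ = F.card - 1 := Finset.card_erase_of_mem hpF
              _ ≤ m := by omega
          have hgen : ∀ l, (w l ≠ 0 ∧ w l ≠ 1) → l = i ∨ l = j ∨ l ∈ F := by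
            intro l hl
            by_cases hli : l = i
            · exact Or.inl hli
            by_cases hlj : l = j
            · exact Or.inr (Or.inl hlj)
            · refine Or.inr (Or.inr ?_)
              rw [hwo l hli hlj] at hl
              simp [hF, hl.1, hl.2]
          have key : ∀ p, p ∈ F → (w p = 0 ∨ w p = 1) →
              (Finset.univ.filter (fun l => w l ≠ 0 ∧ w l ≠ 1)).card ≤ m := by
            intro p hpF hp01
            refine hsub p hpF ?_
            intro l hl
            simp only [Finset.mem_filter, Finset.mem_univ, true_and] at hl
            have hlnp : l ≠ p := by
              rintro rfl
              rcases hp01 with h' | h'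
              exacts [hl.1 h', hl.2 h']
            refine Finset.mem_erase.mpr ⟨hlnp, ?_⟩
            rcases hgen l hl with rfl | rfl | hmem
            · exact hiF
            · exact hjF
            · exact hmem
          rcases hcase with h' | h' | h' | h'
          exacts [key i hiF (Or.inl h'), key i hiF (Or.inr h'),
            key j hjF (Or.inl h'), key j hjF (Or.inr h')]
        have hycard : (Finset.univ.filter (fun l => y l ≠ 0 ∧ y l ≠ 1)).card ≤ m := by
          refine hcards y hyo ?_
          rcases min_cases (1 - a) b with ⟨he, _⟩ | ⟨he, _⟩
          · right; left; rw [hyi, htp, he]; ring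
          · right; right; left; rw [hyj, htp, he]; ring
        have hzcard : (Finset.univ.filter (fun l => z l ≠ 0 ∧ z l ≠ 1)).card ≤ m := by
          refine hcards z hzo ?_
          rcases min_cases a (1 - b) with ⟨he, _⟩ | ⟨he, _⟩
          · left; rw [hzi, htm, he]; ring
          · right; right; right; rw [hzj, htm, he]; ring
        have hyin := ih y hycard hy0 hy1 (by rw [hsumy]; exact hs)
        have hzin := ih z hzcard hz0 hz1 (by rw [hsumz]; exact hs)
        -- x is a convex combination of y and z
        have hts : 0 < tp + tm := by linarith
        have hcombo : (tm / (tp + tm)) • y + (tp / (tp + tm)) • z = x := by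
          funext l
          simp only [Pi.add_apply, Pi.smul_apply, smul_eq_mul]
          by_cases hlj : l = j
          · subst hlj; rw [hyj, hzj]; field_simp; ring
          by_cases hli : l = i
          · subst hli; rw [hyi, hzi]; field_simp; ring
          · rw [hyo l hli hlj, hzo l hli hlj]; field_simp; ring
        rw [← hcombo]
        exact convex_convexHull ℝ _ hyin hzin (by positivity) (by positivity)
          (by field_simp; ring)
      · -- only one fractional coordinate: round it
        push_neg at hj
        have hoth : ∀ l, l ≠ i → (x l = 0 ∨ x l = 1) := by
          intro l hli
          by_contra h
          push_neg at h
          have : l ∈ F := by simp [hF, h.1, h.2]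
          exact hli (hj l this)
        set c := ((Finset.univ.erase i).filter (fun l => x l = 1)).card with hcdef
        have hsum_erase : ∑ l ∈ Finset.univ.erase i, x l = (c : ℝ) :=
          sum01 _ _ (fun l hl => hoth l (Finset.mem_erase.mp hl).1)
        have hsx : ∑ l, x l = x i + (c : ℝ) := by
          rw [← Finset.add_sum_erase _ _ (Finset.mem_univ i), hsum_erase]
        have hck : (c : ℝ) < k := by rw [hsx] at hs; linarith
        have hck' : (c : ℝ) + 1 ≤ k := by
          have : c < k := by exact_mod_cast hck
          have : c + 1 ≤ k := this
          exact_mod_cast this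
        set y := Function.update x i (0:ℝ) with hy
        set z := Function.update x i (1:ℝ) with hz
        have hyin : y ∈ {y : Fin n → ℝ | (∀ i, y i = 0 ∨ y i = 1) ∧ ∑ i, y i ≤ (k : ℝ)} := by
          constructor
          · intro l
            by_cases hli : l = i
            · subst hli; left; simp [hy]
            · simpa [hy, Function.update, hli] using hoth l hli
          · rw [Finset.sum_update_of_mem (Finset.mem_univ i), Finset.sdiff_singleton_eq_erase, hsum_erase]
            linarith
        have hzin : z ∈ {y : Fin n → ℝ | (∀ i, y i = 0 ∨ y i = 1) ∧ ∑ i, y i ≤ (k : ℝ)} := by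
          constructor
          · intro l
            by_cases hli : l = i
            · subst hli; right; simp [hz]
            · simpa [hz, Function.update, hli] using hoth l hli
          · rw [Finset.sum_update_of_mem (Finset.mem_univ i), Finset.sdiff_singleton_eq_erase, hsum_erase]
            linarith
        have hcombo : (1 - x i) • y + (x i) • z = x := by
          funext l
          simp only [Pi.add_apply, Pi.smul_apply, smul_eq_mul]
          by_cases hli : l = i
          · subst hli; simp [hy, hz]
          · simp [hy, hz, Function.update, hli]; ring
        rw [← hcombo]
        exact convex_convexHull ℝ _ (subset_convexHull ℝ _ hyin) (subset_convexHull ℝ _ hzin)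
          (by linarith) (by linarith) (by ring)

/-- Second part of Lemma 1 (Overton–Womersley): the convex hull of the set of
orthogonal projection matrices of rank at most `k` (i.e. trace at most `k`)
equals `{P : 0 ⪯ P ⪯ I, trace(P) ≤ k}`. -/
theorem stmt15 (n k : ℕ) (hn : 1 ≤ n) (hk1 : 1 ≤ k) (hkn : k ≤ n) :
    convexHull ℝ
        {Y : Matrix (Fin n) (Fin n) ℝ | Y.IsSymm ∧ Y * Y = Y ∧ Y.trace ≤ (k : ℝ)} =
      {P : Matrix (Fin n) (Fin n) ℝ |
        P.PosSemidef ∧ (1 - P).PosSemidef ∧ P.trace ≤ (k : ℝ)} := by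
  apply Set.Subset.antisymm
  · refine convexHull_min ?_ ?_
    · rintro Y ⟨hsymm, hidem, htr⟩
      have hherm : Y.IsHermitian := (conjTranspose_eq_transpose_of_trivial Y).trans hsymm.eq
      refine ⟨?_, ?_, htr⟩
      · have h := posSemidef_conjTranspose_mul_self Y
        rwa [hherm.eq, hidem] at h
      · have h1 : (1 - Y).IsHermitian := isHermitian_one.sub hherm
        have hi : (1 - Y) * (1 - Y) = 1 - Y := by
          rw [sub_mul, one_mul, mul_sub, mul_one, hidem]
          abel
        have h := posSemidef_conjTranspose_mul_self (1 - Y)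
        rwa [h1.eq, hi] at h
    · intro P hP Q hQ a b ha hb hab
      obtain ⟨hP1, hP2, hP3⟩ := hP
      obtain ⟨hQ1, hQ2, hQ3⟩ := hQ
      have smulPSD : ∀ (c : ℝ), 0 ≤ c → ∀ {A : Matrix (Fin n) (Fin n) ℝ},
          A.PosSemidef → (c • A).PosSemidef := by
        intro c hc A hA
        refine ⟨?_, fun v => ?_⟩
        · show (c • A)ᴴ = c • A
          rw [conjTranspose_smul, star_trivial, hA.1.eq]
        · exact (hA.smul hc).2 v
      refine ⟨(smulPSD a ha hP1).add (smulPSD b hb hQ1), ?_, ?_⟩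
      · have h1 : a • (1 : Matrix (Fin n) (Fin n) ℝ) + b • 1 = 1 := by
          rw [← add_smul, hab, one_smul]
        have h2 : 1 - (a • P + b • Q) = a • (1 - P) + b • (1 - Q) := by
          conv_lhs => rw [← h1]
          rw [smul_sub, smul_sub]
          abel
        rw [h2]
        exact (smulPSD a ha hP2).add (smulPSD b hb hQ2)
      · rw [trace_add, trace_smul, trace_smul, smul_eq_mul, smul_eq_mul]
        nlinarith [mul_le_mul_of_nonneg_left hP3 ha, mul_le_mul_of_nonneg_left hQ3 hb]
  · rintro P ⟨hP, hIP, htr⟩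
    have hherm := hP.1
    set U : Matrix (Fin n) (Fin n) ℝ := (hherm.eigenvectorUnitary : Matrix (Fin n) (Fin n) ℝ) with hU
    have hU1 : star U * U = 1 := mem_unitaryGroup_iff'.mp hherm.eigenvectorUnitary.2
    have hU2 : U * star U = 1 := mem_unitaryGroup_iff.mp hherm.eigenvectorUnitary.2
    set μ := hherm.eigenvalues with hμ
    have hspec : P = U * diagonal μ * star U := by
      have h := hherm.spectral_theorem
      simpa [hU] using h
    have hdiag : star U * P * U = diagonal μ := by
      rw [hspec]; simp only [Matrix.mul_assoc]
      rw [← Matrix.mul_assoc (star U) U, hU1, one_mul, mul_one]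
    have hμ0 : ∀ i, 0 ≤ μ i := hP.eigenvalues_nonneg
    have hμ1 : ∀ i, μ i ≤ 1 := by
      have h := hIP.conjTranspose_mul_mul_same U
      have heq : Uᴴ * ((1 : Matrix (Fin n) (Fin n) ℝ) - P) * U
          = diagonal (fun i => 1 - μ i) := by
        rw [← star_eq_conjTranspose, mul_sub, sub_mul, mul_one, hU1, hdiag]
        ext i j
        rcases eq_or_ne i j with rfl | hij
        · simp [Matrix.sub_apply, Matrix.diagonal_apply_eq, Matrix.one_apply_eq]
        · simp [Matrix.sub_apply, Matrix.diagonal_apply_ne _ hij, Matrix.one_apply_ne hij]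
      rw [heq] at h
      intro i
      have := posSemidef_diagonal_iff.mp h i
      linarith
    have htrP : P.trace = ∑ i, μ i := by
      conv_lhs => rw [hspec]
      rw [trace_mul_cycle, hU1, one_mul, trace_diagonal]
    have htrμ : ∑ i, μ i ≤ (k : ℝ) := by rw [← htrP]; exact htr
    have hx := frac_lemma n k n μ
      ((Finset.card_filter_le _ _).trans (by simp)) hμ0 hμ1 htrμ
    set f : (Fin n → ℝ) → Matrix (Fin n) (Fin n) ℝ :=
      fun x => U * diagonal x * star U with hf
    have hlin : IsLinearMap ℝ f := by
      constructor
      · intro u v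
        have hd : (diagonal (u + v) : Matrix (Fin n) (Fin n) ℝ)
            = diagonal u + diagonal v := by rw [diagonal_add]; rfl
        simp only [hf, hd, mul_add, add_mul]
      · intro c u
        have hd : (diagonal (c • u) : Matrix (Fin n) (Fin n) ℝ)
            = c • diagonal u := diagonal_smul c u
        simp only [hf, hd, Matrix.mul_smul, Matrix.smul_mul]
    have hmem : f μ ∈ f '' (convexHull ℝ
        {y : Fin n → ℝ | (∀ i, y i = 0 ∨ y i = 1) ∧ ∑ i, y i ≤ (k : ℝ)}) := ⟨μ, hx, rfl⟩
    rw [hlin.image_convexHull] at hmem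
    rw [show P = f μ from hspec]
    refine convexHull_mono ?_ hmem
    rintro Y ⟨x, ⟨hx01, hxk⟩, rfl⟩
    have hxx : diagonal x * diagonal x = diagonal x := by
      have hfun : (fun i => x i * x i) = x := by
        funext i
        rcases hx01 i with h | h <;> rw [h] <;> ring
      rw [diagonal_mul_diagonal, hfun]
    refine ⟨?_, ?_, ?_⟩
    · have hdstar : star (diagonal x) = diagonal x := by
        rw [star_eq_conjTranspose, diagonal_conjTranspose]
        simp
      have hh : (f x)ᴴ = f x := by
        rw [← star_eq_conjTranspose]
        simp only [hf, Matrix.star_mul, star_star, hdstar]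
        simp [Matrix.mul_assoc]
      exact (conjTranspose_eq_transpose_of_trivial (f x)).symm.trans hh
    · show (U * diagonal x * star U) * (U * diagonal x * star U) = U * diagonal x * star U
      simp only [Matrix.mul_assoc]
      rw [← Matrix.mul_assoc (star U) U, hU1, one_mul,
        ← Matrix.mul_assoc (diagonal x) (diagonal x), hxx]
    · show (U * diagonal x * star U).trace ≤ (k : ℝ)
      rw [trace_mul_cycle, hU1, one_mul, trace_diagonal]
      exact hxk
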